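/- For H = (px²+py²+pz²)/2 + k1(x²+y²+4z²) + k2/x² + k3/y² + k4/z² with k4 ≥ 0, the quartic function K_6b = (K_RL1)² + (2k4/z²)(x·px)², where K_RL1 = −px·(z·px−x·pz) + 2k1x²z − 2k2 z/x², satisfies {K_6b, H} = 0. -/

import Mathlib

noncomputable section

/-- Phase space ℝ⁶ with coordinates (x,y,z,px,py,pz). -/
abbrev Pt := Fin 6 → ℝ

/-- Standard basis vector. -/
def e (j : Fin 6) : Pt := Pi.single j 1

/-- Canonical Poisson bracket on ℝ⁶:
{F,G} = Σᵢ (∂F/∂qᵢ ∂G/∂pᵢ − ∂F/∂pᵢ ∂G/∂qᵢ). -/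
def pb (F G : Pt → ℝ) (q : Pt) : ℝ :=
    (fderiv ℝ F q (e 0)) * (fderiv ℝ G q (e 3)) - (fderiv ℝ F q (e 3)) * (fderiv ℝ G q (e 0))
  + (fderiv ℝ F q (e 1)) * (fderiv ℝ G q (e 4)) - (fderiv ℝ F q (e 4)) * (fderiv ℝ G q (e 1))
  + (fderiv ℝ F q (e 2)) * (fderiv ℝ G q (e 5)) - (fderiv ℝ F q (e 5)) * (fderiv ℝ G q (e 2))

/-- H = (px²+py²+pz²)/2 + k1(x²+y²+4z²) + k2/x² + k3/y² + k4/z². -/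
def Ham (k1 k2 k3 k4 : ℝ) (q : Pt) : ℝ :=
  (q 3 ^ 2 + q 4 ^ 2 + q 5 ^ 2) / 2 + k1 * (q 0 ^ 2 + q 1 ^ 2 + 4 * q 2 ^ 2)
    + k2 / q 0 ^ 2 + k3 / q 1 ^ 2 + k4 / q 2 ^ 2

/-- K_RL1 = −px·(z px − x pz) + 2k1 x² z − 2k2 z/x². -/
def KRL1 (k1 k2 : ℝ) (q : Pt) : ℝ :=
  -(q 3 * (q 2 * q 3 - q 0 * q 5)) + 2 * k1 * q 0 ^ 2 * q 2 - 2 * k2 * q 2 / q 0 ^ 2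

/-- K_6b = (K_RL1)² + (2k4/z²)(x px)². -/
def K6b (k1 k2 k4 : ℝ) (q : Pt) : ℝ :=
  (KRL1 k1 k2 q) ^ 2 + (2 * k4 / q 2 ^ 2) * (q 0 * q 3) ^ 2

lemma hproj (i : Fin 6) (q : Pt) :
    HasFDerivAt (fun p : Pt => p i) (ContinuousLinearMap.proj i : Pt →L[ℝ] ℝ) q :=
  hasFDerivAt_apply i q

lemma hsq (i : Fin 6) (q : Pt) :
    HasFDerivAt (fun p : Pt => p i ^ 2) ((2 * q i) • (ContinuousLinearMap.proj i : Pt →L[ℝ] ℝ)) q := by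
  simpa [Function.comp_def] using (hasDerivAt_pow 2 (q i)).comp_hasFDerivAt q (hproj i q)

lemma hinv (i : Fin 6) (q : Pt) (h : q i ≠ 0) :
    HasFDerivAt (fun p : Pt => (p i ^ 2)⁻¹)
      ((-(2 * q i) / q i ^ 4) • (ContinuousLinearMap.proj i : Pt →L[ℝ] ℝ)) q := by
  have h2 : q i ^ 2 ≠ 0 := pow_ne_zero _ h
  have H := (hasDerivAt_inv h2).comp_hasFDerivAt q (hsq i q)
  simp only [Function.comp_def, smul_smul] at H
  have e1 : -((q i ^ 2) ^ 2)⁻¹ * (2 * q i) = -(2 * q i) / q i ^ 4 := by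
    field_simp
  rwa [e1] at H

set_option maxHeartbeats 2000000 in
theorem stmt9 (k1 k2 k3 k4 : ℝ) (hk4 : k4 ≥ 0) :
    ∀ q : Pt, q 0 ≠ 0 → q 1 ≠ 0 → q 2 ≠ 0 →
      pb (K6b k1 k2 k4) (Ham k1 k2 k3 k4) q = 0 := by
  intro q hx hy hz
  have dH : HasFDerivAt (Ham k1 k2 k3 k4) _ q :=
    (((((((hsq 3 q).add (hsq 4 q)).add (hsq 5 q)).mul_const (2:ℝ)⁻¹).add
       ((((hsq 0 q).add (hsq 1 q)).add ((hsq 2 q).const_mul 4)).const_mul k1)).add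
      ((hinv 0 q hx).const_mul k2)).add ((hinv 1 q hy).const_mul k3)).add
      ((hinv 2 q hz).const_mul k4)
  have dK1 : HasFDerivAt (KRL1 k1 k2) _ q :=
    ((((hproj 3 q).mul (((hproj 2 q).mul (hproj 3 q)).sub ((hproj 0 q).mul (hproj 5 q)))).neg).add
      (((hsq 0 q).const_mul (2*k1)).mul (hproj 2 q))).sub
      (((hproj 2 q).const_mul (2*k2)).mul (hinv 0 q hx))
  have hpx : HasFDerivAt (fun p : Pt => p 0 * p 3) _ q := (hproj 0 q).mul (hproj 3 q)
  have hsqx :=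
    (hasDerivAt_pow 2 (q 0 * q 3)).comp_hasFDerivAt q hpx
  have dK6 : HasFDerivAt (K6b k1 k2 k4) _ q :=
    ((hasDerivAt_pow 2 (KRL1 k1 k2 q)).comp_hasFDerivAt q dK1).add
      (((hinv 2 q hz).const_mul (2*k4)).mul
        hsqx)
  simp only [pb]
  rw [dK6.fderiv, dH.fderiv]
  simp only [e, ContinuousLinearMap.add_apply, ContinuousLinearMap.sub_apply,
    ContinuousLinearMap.neg_apply, ContinuousLinearMap.smul_apply,
    ContinuousLinearMap.proj_apply, smul_eq_mul, KRL1, Pi.single_apply, Pi.mul_apply, Pi.sub_apply]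
  simp only [show ((0:Fin 6) = 1) = False from by decide,
    show ((0:Fin 6) = 2) = False from by decide,
    show ((0:Fin 6) = 3) = False from by decide,
    show ((0:Fin 6) = 4) = False from by decide,
    show ((0:Fin 6) = 5) = False from by decide,
    show ((1:Fin 6) = 0) = False from by decide,
    show ((1:Fin 6) = 2) = False from by decide,
    show ((1:Fin 6) = 3) = False from by decide,
    show ((1:Fin 6) = 4) = False from by decide,
    show ((1:Fin 6) = 5) = False from by decide,
    show ((2:Fin 6) = 0) = False from by decide,
    show ((2:Fin 6) = 1) = False from by decide,
    show ((2:Fin 6) = 3) = False from by decide,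
    show ((2:Fin 6) = 4) = False from by decide,
    show ((2:Fin 6) = 5) = False from by decide,
    show ((3:Fin 6) = 0) = False from by decide,
    show ((3:Fin 6) = 1) = False from by decide,
    show ((3:Fin 6) = 2) = False from by decide,
    show ((3:Fin 6) = 4) = False from by decide,
    show ((3:Fin 6) = 5) = False from by decide,
    show ((4:Fin 6) = 0) = False from by decide,
    show ((4:Fin 6) = 1) = False from by decide,
    show ((4:Fin 6) = 2) = False from by decide,
    show ((4:Fin 6) = 3) = False from by decide,
    show ((4:Fin 6) = 5) = False from by decide,
    show ((5:Fin 6) = 0) = False from by decide,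
    show ((5:Fin 6) = 1) = False from by decide,
    show ((5:Fin 6) = 2) = False from by decide,
    show ((5:Fin 6) = 3) = False from by decide,
    show ((5:Fin 6) = 4) = False from by decide,
    if_true, if_false, mul_zero, zero_mul, mul_one, add_zero, zero_add, sub_zero, zero_sub,
    mul_neg, neg_zero, neg_neg, pow_one, Nat.cast_ofNat]
  norm_num
  field_simp
  ring
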